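/- Let C_4 be the 4-cycle with vertices {0,1,2,3} and edges 0–1, 1–2, 2–3, 3–0, let P_4 be the path with vertices {a,b,c,d,e} and edges a–b, b–c, c–d, d–e, and let f : P_4 → C_4 be the graph homomorphism with f(a)=0, f(b)=1, f(c)=2, f(d)=3, f(e)=0. Then for every digraph D without isolated points, every graph homomorphism χ : P_4 → D ⋆ (P_4, a, e) satisfying f_D ∘ χ = f is equal to φ_{(u,v)} for some edge (u,v) ∈ E(D). -/

import Mathlib

open SimpleGraph

attribute [local instance] Classical.propDecidable

/-- The vertex set of the arrow construction `D ⋆ H`: the disjoint union of `D` and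
`E(D) × (V(H) ∖ {a, b})`, where `E(D)` is the set of edges of the digraph `(D, E)` and
`a`, `b` are the two distinguished vertices of `H`. -/
def starVert (V : Type*) (a b : V) (D : Type*) (E : D → D → Prop) : Type _ :=
  D ⊕ ({p : D × D // E p.1 p.2} × {x : V // x ≠ a ∧ x ≠ b})

/-- For an edge `(u, v)` of the digraph `(D, E)`, the map
`φ_{(u,v)} : V(H) → V(D ⋆ H)` sending `a ↦ u`, `b ↦ v`, and `x ↦ (u, v, x)` otherwise. -/
noncomputable def starPhi {V : Type*} (a b : V) {D : Type*} {E : D → D → Prop}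
    (u v : D) (huv : E u v) (x : V) : starVert V a b D E :=
  if hx : x = a then Sum.inl u
  else if hx' : x = b then Sum.inl v
  else Sum.inr (⟨(u, v), huv⟩, ⟨x, hx, hx'⟩)

/-- The arrow construction `D ⋆ H` for a simple graph `H` with distinguished vertices
`a`, `b` and a digraph `(D, E)`: the edges are exactly the pairs
`(φ_{(u,v)} s, φ_{(u,v)} t)` for `(u, v) ∈ E(D)` and `(s, t) ∈ E(H)`. -/
noncomputable def starGraph {V : Type*} (H : SimpleGraph V) (a b : V)
    (D : Type*) (E : D → D → Prop) : SimpleGraph (starVert V a b D E) :=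
  SimpleGraph.fromRel (fun x y => ∃ (u v : D) (huv : E u v) (s t : V),
    H.Adj s t ∧ starPhi a b u v huv s = x ∧ starPhi a b u v huv t = y)

/-- Given a vertex map `f : V(H) → V(G)` (intended to satisfy `f a = f b`), the map
`f_D : V(D ⋆ H) → V(G)` sending every vertex of `D` to `f a` and `(u, v, y) ↦ f y`. -/
def starMap {V W : Type*} (f : V → W) (a b : V) {D : Type*} {E : D → D → Prop} :
    starVert V a b D E → W :=
  Sum.elim (fun _ => f a) (fun p => f p.2.val)

/-- Given a digraph homomorphism `h : (D₁, E₁) → (D₂, E₂)`, the map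
`h ⋆ H : V(D₁ ⋆ H) → V(D₂ ⋆ H)` sending `x ↦ h x` for `x ∈ D₁` and
`(u, v, w) ↦ (h u, h v, w)`. -/
def starMapHom {V : Type*} (a b : V) {D₁ D₂ : Type*}
    {E₁ : D₁ → D₁ → Prop} {E₂ : D₂ → D₂ → Prop}
    (h : D₁ → D₂) (hh : ∀ u v, E₁ u v → E₂ (h u) (h v)) :
    starVert V a b D₁ E₁ → starVert V a b D₂ E₂ :=
  Sum.elim (fun x => Sum.inl (h x))
    (fun p => Sum.inr (⟨(h p.1.val.1, h p.1.val.2), hh _ _ p.1.prop⟩, p.2))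

lemma starGraph_adj' {V : Type*} {H : SimpleGraph V} {a b : V} {D : Type*} {E : D → D → Prop}
    {x y : starVert V a b D E} (h : (starGraph H a b D E).Adj x y) :
    ∃ (u v : D) (huv : E u v) (s t : V), H.Adj s t ∧
      starPhi a b u v huv s = x ∧ starPhi a b u v huv t = y := by
  rw [_root_.starGraph, fromRel_adj] at h
  obtain ⟨-, h | h⟩ := h
  · exact h
  · obtain ⟨u, v, huv, s, t, hst, hs, ht⟩ := h
    exact ⟨u, v, huv, t, s, hst.symm, ht, hs⟩

lemma phi_eq_inr {V : Type*} {a b : V} {D : Type*} {E : D → D → Prop}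
    {u v : D} {huv : E u v} {s : V} {e : {p : D × D // E p.1 p.2}}
    {x : {x : V // x ≠ a ∧ x ≠ b}}
    (h : starPhi a b u v huv s = Sum.inr (e, x)) :
    u = e.val.1 ∧ v = e.val.2 ∧ s = x.val := by
  unfold starPhi starVert at h
  split_ifs at h with h1 h2
  injection h with h
  rw [Prod.ext_iff] at h
  obtain ⟨h1', h2'⟩ := h
  subst h1'; subst h2'
  exact ⟨rfl, rfl, rfl⟩

lemma phi_eq_inl {V : Type*} {a b : V} {D : Type*} {E : D → D → Prop}
    {u v : D} {huv : E u v} {s : V} {d : D}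
    (h : starPhi a b u v huv s = Sum.inl d) :
    (s = a ∧ d = u) ∨ (s = b ∧ d = v) := by
  unfold starPhi starVert at h
  split_ifs at h with h1 h2
  · exact Or.inl ⟨h1, (Sum.inl.injEq .. ▸ h).symm⟩
  · exact Or.inr ⟨h2, (Sum.inl.injEq .. ▸ h).symm⟩

/-- Let `C₄` be the 4-cycle with vertices `{0,1,2,3}` and edges `0–1, 1–2, 2–3, 3–0`,
`P₄ = pathGraph 5` the path with vertices `a,b,c,d,e = 0,1,2,3,4` and edges
`a–b, b–c, c–d, d–e`, and `f : P₄ → C₄` the graph homomorphism `f = ![0,1,2,3,0]`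
(so `f a = 0, f b = 1, f c = 2, f d = 3, f e = 0`). Then for every digraph `(D, E)` without
isolated points, every graph homomorphism `χ : P₄ → D ⋆ (P₄, a, e)` with `f_D ∘ χ = f`
equals `φ_{(u,v)}` for some edge `(u, v) ∈ E(D)`. -/
theorem stmt11 (D : Type*) (E : D → D → Prop)
    (hD : ∀ d : D, ∃ d', E d d' ∨ E d' d)
    (χ : pathGraph 5 →g starGraph (pathGraph 5) (0 : Fin 5) 4 D E)
    (hχ : ∀ x : Fin 5,
      starMap (![0, 1, 2, 3, 0] : Fin 5 → Fin 4) 0 4 (χ x) = ![0, 1, 2, 3, 0] x) :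
    ∃ (u v : D) (huv : E u v), ∀ x : Fin 5, χ x = starPhi 0 4 u v huv x := by
  have finj : ∀ y i : Fin 5, i ≠ 0 → i ≠ 4 →
      (![0, 1, 2, 3, 0] : Fin 5 → Fin 4) y = ![0, 1, 2, 3, 0] i → y = i := by decide
  have fne : ∀ y : Fin 5, y ≠ 0 → y ≠ 4 → (![0, 1, 2, 3, 0] : Fin 5 → Fin 4) y ≠ 0 := by decide
  have mid : ∀ (i : Fin 5) (hi0 : i ≠ 0) (hi4 : i ≠ 4),
      ∃ e : {p : D × D // E p.1 p.2}, χ i = Sum.inr (e, ⟨i, hi0, hi4⟩) := by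
    intro i hi0 hi4
    have h := hχ i
    rcases hc : χ i with d | ⟨e, x⟩
    · rw [hc] at h
      simp only [starMap, Sum.elim_inl] at h
      exact absurd h.symm (fne i hi0 hi4)
    · rw [hc] at h
      simp only [starMap, Sum.elim_inr] at h
      have hx : x = ⟨i, hi0, hi4⟩ := Subtype.ext (finj x.val i hi0 hi4 h)
      exact ⟨e, by rw [hx]⟩
  have endpt : ∀ i : Fin 5, (![0, 1, 2, 3, 0] : Fin 5 → Fin 4) i = 0 →
      ∃ d, χ i = Sum.inl d := by
    intro i hi
    rcases hc : χ i with d | ⟨e, x⟩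
    · exact ⟨d, rfl⟩
    · exfalso
      have h := hχ i
      rw [hc] at h
      simp only [starMap, Sum.elim_inr] at h
      exact fne x.val x.prop.1 x.prop.2 (h.trans hi)
  obtain ⟨e1, hc1⟩ := mid 1 (by decide) (by decide)
  obtain ⟨e2, hc2⟩ := mid 2 (by decide) (by decide)
  obtain ⟨e3, hc3⟩ := mid 3 (by decide) (by decide)
  obtain ⟨d0, hc0⟩ := endpt 0 (by decide)
  obtain ⟨d4, hc4⟩ := endpt 4 (by decide)
  have adj01 : (pathGraph 5).Adj 0 1 := by rw [pathGraph_adj]; left; rfl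
  have adj12 : (pathGraph 5).Adj 1 2 := by rw [pathGraph_adj]; left; rfl
  have adj23 : (pathGraph 5).Adj 2 3 := by rw [pathGraph_adj]; left; rfl
  have adj34 : (pathGraph 5).Adj 3 4 := by rw [pathGraph_adj]; left; rfl
  -- edge 0–1
  obtain ⟨u, v, huv, s, t, hst, hs, ht⟩ := starGraph_adj' (χ.map_adj adj01)
  rw [hc0] at hs; rw [hc1] at ht
  obtain ⟨hu, hv, htv⟩ := phi_eq_inr ht
  subst hu; subst hv; subst htv
  have hd0 : d0 = e1.val.1 := by
    rcases phi_eq_inl hs with ⟨hs4, hd⟩ | ⟨hs4, hd⟩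
    · exact hd
    · exfalso; rw [hs4] at hst; rw [pathGraph_adj] at hst
      revert hst; decide
  -- edge 1–2
  obtain ⟨u, v, huv, s, t, hst, hs, ht⟩ := starGraph_adj' (χ.map_adj adj12)
  rw [hc1] at hs; rw [hc2] at ht
  obtain ⟨hu1, hv1, -⟩ := phi_eq_inr hs
  obtain ⟨hu2, hv2, -⟩ := phi_eq_inr ht
  have he12 : e1 = e2 := Subtype.ext (Prod.ext (hu1 ▸ hu2) (hv1 ▸ hv2))
  -- edge 2–3
  obtain ⟨u, v, huv, s, t, hst, hs, ht⟩ := starGraph_adj' (χ.map_adj adj23)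
  rw [hc2] at hs; rw [hc3] at ht
  obtain ⟨hu1, hv1, -⟩ := phi_eq_inr hs
  obtain ⟨hu2, hv2, -⟩ := phi_eq_inr ht
  have he23 : e2 = e3 := Subtype.ext (Prod.ext (hu1 ▸ hu2) (hv1 ▸ hv2))
  -- edge 3–4
  obtain ⟨u, v, huv, s, t, hst, hs, ht⟩ := starGraph_adj' (χ.map_adj adj34)
  rw [hc3] at hs; rw [hc4] at ht
  obtain ⟨hu, hv, hsv⟩ := phi_eq_inr hs
  subst hu; subst hv; subst hsv
  have hd4 : d4 = e3.val.2 := by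
    rcases phi_eq_inl ht with ⟨ht0, hd⟩ | ⟨ht0, hd⟩
    · exfalso; rw [ht0] at hst; rw [pathGraph_adj] at hst
      revert hst; decide
    · exact hd
  subst he23; subst he12
  refine ⟨e1.val.1, e1.val.2, e1.prop, fun x => ?_⟩
  have h0ne4 : (0 : Fin 5) ≠ 4 := by decide
  fin_cases x
  · show χ 0 = starPhi 0 4 e1.val.1 e1.val.2 e1.prop 0
    rw [hc0, hd0]; unfold starPhi starVert; rw [dif_pos rfl]
  · show χ 1 = starPhi 0 4 e1.val.1 e1.val.2 e1.prop 1
    rw [hc1]; unfold starPhi starVert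
    rw [dif_neg (by decide : (1 : Fin 5) ≠ 0), dif_neg (by decide : (1 : Fin 5) ≠ 4)]
  · show χ 2 = starPhi 0 4 e1.val.1 e1.val.2 e1.prop 2
    rw [hc2]; unfold starPhi starVert
    rw [dif_neg (by decide : (2 : Fin 5) ≠ 0), dif_neg (by decide : (2 : Fin 5) ≠ 4)]
  · show χ 3 = starPhi 0 4 e1.val.1 e1.val.2 e1.prop 3
    rw [hc3]; unfold starPhi starVert
    rw [dif_neg (by decide : (3 : Fin 5) ≠ 0), dif_neg (by decide : (3 : Fin 5) ≠ 4)]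
  · show χ 4 = starPhi 0 4 e1.val.1 e1.val.2 e1.prop 4
    rw [hc4, hd4]; unfold starPhi starVert
    rw [dif_neg (by decide : (4 : Fin 5) ≠ 0), dif_pos rfl]
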